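/- Let 0 ≤ α < 1, 0 ≤ x₁ < x₂ ≤ 1, let 𝓜 = 𝓜_{α,x₁,x₂} be the piecewise linear transformation of [0,1) with maximal invariant set 𝓢. Then: (i) ∅ ≠ 𝓢 ⊆ U if and only if ⟨α + x₂ − x₁⟩ = p/q and x₁ > (q−1)/q, where p/q is a simple fraction for some integers 0 ≤ p < q; and in this case Y(α) = p/q and 𝓢 = ∪_{k=0}^{q−1} [k/q, (k−q+1)/q + x₁). (ii) ∅ ≠ 𝓢 ⊆ V if and only if α = p/q and x₂ < 1/q, where p/q is a simple fraction for some integers 0 ≤ p < q; and in this case Y(α) = p/q and 𝓢 = ∪_{k=0}^{q−1} [x₂ + k/q, (k+1)/q). -/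

import Mathlib

/-- The piecewise linear transformation `𝓜_{α,x₁,x₂}` of the circle `[0,1)`:
`t ↦ ⟨t + α + x₂ - x₁⟩` on `U = [0,x₁)`, identity on `H = [x₁,x₂)`,
and `t ↦ ⟨t + α⟩` on `V = [x₂,1)`. -/
noncomputable def Mmap (α x₁ x₂ : ℝ) (t : ℝ) : ℝ :=
  if t < x₁ then Int.fract (t + α + x₂ - x₁)
  else if t < x₂ then t
  else Int.fract (t + α)

/-- The maximal invariant set `𝓢` of `𝓜_{α,x₁,x₂}`: points of `[0,1)` whose orbit
never enters `H = [x₁,x₂)`. -/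
def Sset (α x₁ x₂ : ℝ) : Set ℝ :=
  {t | t ∈ Set.Ico (0 : ℝ) 1 ∧ ∀ n : ℕ, (Mmap α x₁ x₂)^[n] t ∉ Set.Ico x₁ x₂}

/-- The squeezing map `Y(t) = ⟨|𝓢 ∩ [0,t)| / |𝓢|⟩`. -/
noncomputable def Ymap (α x₁ x₂ : ℝ) (t : ℝ) : ℝ :=
  Int.fract ((MeasureTheory.volume (Sset α x₁ x₂ ∩ Set.Ico 0 t)).toReal /
    (MeasureTheory.volume (Sset α x₁ x₂)).toReal)


open Set MeasureTheory

lemma fract_fract_add (x y : ℝ) : Int.fract (Int.fract x + y) = Int.fract (x + y) := by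
  rw [show Int.fract x + y = x + y - ⌊x⌋ by rw [Int.fract]; ring, Int.fract_sub_intCast]

lemma fract_add_fract (x y : ℝ) : Int.fract (x + Int.fract y) = Int.fract (x + y) := by
  rw [add_comm, fract_fract_add, add_comm]

lemma fract_nat_mul_fract (q : ℕ) (x : ℝ) :
    Int.fract ((q : ℝ) * Int.fract x) = Int.fract ((q : ℝ) * x) := by
  have h : (q : ℝ) * Int.fract x = (q : ℝ) * x - ((q * ⌊x⌋ : ℤ) : ℝ) := by
    rw [Int.fract]; push_cast; ring
  rw [h, Int.fract_sub_intCast]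

lemma fract_ne_zero_of_irrational {x : ℝ} (h : Irrational x) : Int.fract x ≠ 0 := by
  intro h0
  have h1 : x = (⌊x⌋ : ℝ) := by
    have := Int.fract_add_floor x
    rw [h0] at this; linarith
  exact h ⟨(⌊x⌋ : ℚ), by push_cast; exact h1.symm⟩

lemma exists_add_mul_mod (p q : ℕ) (hq : 0 < q) (h : Nat.Coprime p q) (a b : ℕ) :
    ∃ j : ℕ, (a + j * p) % q = b % q := by
  haveI : NeZero q := ⟨hq.ne'⟩
  have hu : IsUnit (p : ZMod q) := (ZMod.isUnit_iff_coprime p q).mpr h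
  obtain ⟨u, hu⟩ := hu
  refine ⟨((((b : ZMod q) - a) * (u⁻¹ : (ZMod q)ˣ)).val), ?_⟩
  rw [← ZMod.natCast_eq_natCast_iff']
  push_cast
  rw [ZMod.natCast_zmod_val]
  calc (a : ZMod q) + ((b : ZMod q) - a) * (u⁻¹ : (ZMod q)ˣ) * p
      = (a : ZMod q) + ((b : ZMod q) - a) * ((u⁻¹ : (ZMod q)ˣ) * u) := by rw [hu]; ring
    _ = b := by simp

lemma exists_small_step {γ : ℝ} (hγ : Irrational γ) {ε : ℝ} (hε : 0 < ε) :
    ∃ m : ℕ, 0 < m ∧ 0 < Int.fract (m * γ) ∧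
      (Int.fract (m * γ) < ε ∨ 1 - ε < Int.fract (m * γ)) := by
  obtain ⟨N0, hN0⟩ := exists_nat_one_div_lt hε
  set N : ℕ := N0 + 1 with hN
  have hNc : (N:ℝ) = (N0:ℝ) + 1 := by rw [hN]; push_cast; ring
  have hNpos : (0:ℝ) < N := by rw [hNc]; positivity
  have hNε : 1 / (N:ℝ) < ε := by rw [hNc]; exact hN0
  have key : ∀ i j : ℕ, i < j →
      (⌊Int.fract (i * γ) * N⌋ = ⌊Int.fract (j * γ) * N⌋) →
      ∃ m : ℕ, 0 < m ∧ 0 < Int.fract (m * γ) ∧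
        (Int.fract (m * γ) < ε ∨ 1 - ε < Int.fract (m * γ)) := by
    intro i j hij hb
    set u := Int.fract (i * γ) with hu
    set v := Int.fract (j * γ) with hv
    have hu0 : 0 ≤ u := Int.fract_nonneg _
    have hu1 : u < 1 := Int.fract_lt_one _
    have hv0 : 0 ≤ v := Int.fract_nonneg _
    have hv1 : v < 1 := Int.fract_lt_one _
    have hNN : (1 / (N:ℝ)) * N = 1 := by field_simp
    have hd1 : v - u < 1 / N := by
      have h1 : (⌊v * N⌋ : ℝ) ≤ u * N := by rw [← hb]; exact Int.floor_le _
      have h4 : v * N < ⌊v * N⌋ + 1 := Int.lt_floor_add_one _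
      nlinarith
    have hd2 : u - v < 1 / N := by
      have h1 : (⌊v * N⌋ : ℝ) ≤ v * N := Int.floor_le _
      have h2 : u * N < ⌊v * N⌋ + 1 := by rw [← hb]; exact Int.lt_floor_add_one _
      nlinarith
    refine ⟨j - i, by omega, ?_, ?_⟩
    · apply lt_of_le_of_ne (Int.fract_nonneg _)
      symm
      exact fract_ne_zero_of_irrational (hγ.natCast_mul (by omega))
    · have hfr : Int.fract ((j - i : ℕ) * γ) = Int.fract (v - u) := by
        have hmg : ((j - i : ℕ) : ℝ) * γ = j * γ - i * γ := by
          rw [show ((j - i : ℕ) : ℝ) = (j : ℝ) - i by push_cast [Nat.cast_sub hij.le]; ring]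
          ring
        rw [hmg, show (j:ℝ) * γ - i * γ = (v - u) + ((⌊(j:ℝ)*γ⌋ - ⌊(i:ℝ)*γ⌋ : ℤ) : ℝ) by
          rw [hu, hv]; simp only [Int.fract]; push_cast; ring]
        rw [Int.fract_add_intCast]
      rw [hfr]
      rcases le_or_gt u v with h | h
      · left
        rw [Int.fract_eq_self.2 ⟨by linarith, by linarith⟩]
        linarith
      · right
        rw [show v - u = (v - u + 1) - ((1:ℤ):ℝ) by push_cast; ring, Int.fract_sub_intCast,
          Int.fract_eq_self.2 ⟨by linarith, by linarith⟩]
        linarith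
  have hmaps : ∀ i ∈ Finset.range (N+1), (⌊Int.fract (i * γ) * N⌋).toNat ∈ Finset.range N := by
    intro i _
    simp only [Finset.mem_range]
    have h1 : Int.fract (i * γ) * N < N := by
      nlinarith [Int.fract_lt_one ((i:ℝ) * γ), Int.fract_nonneg ((i:ℝ)*γ)]
    have : ⌊Int.fract (i * γ) * N⌋ < (N:ℤ) := Int.floor_lt.2 (by exact_mod_cast h1)
    omega
  obtain ⟨i, hi, j, hj, hij, hfe⟩ :=
    Finset.exists_ne_map_eq_of_card_lt_of_maps_to (by simp) hmaps
  have hfl : ∀ k : ℕ, 0 ≤ ⌊Int.fract (k * γ) * N⌋ := fun k =>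
    Int.floor_nonneg.2 (mul_nonneg (Int.fract_nonneg _) hNpos.le)
  have heq : ⌊Int.fract (i * γ) * N⌋ = ⌊Int.fract (j * γ) * N⌋ := by
    have := hfl i; have := hfl j; omega
  rcases lt_or_gt_of_ne hij with h | h
  · exact key i j h heq
  · exact key j i h heq.symm

lemma fract_eq_sub_one {x : ℝ} (h1 : 1 ≤ x) (h2 : x < 2) : Int.fract x = x - 1 := by
  have h := Int.fract_add_intCast (x - 1) 1
  rw [show (x - 1) + ((1:ℤ):ℝ) = x by push_cast; ring] at h
  rw [h, Int.fract_eq_self.2 ⟨by linarith, by linarith⟩]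

section walk
variable {ρ : ℝ} (hρ0 : 0 < ρ) (hρ1 : ρ < 1) (s : ℕ → ℝ)
  (hs0 : ∀ n, 0 ≤ s n) (hs1 : ∀ n, s n < 1)
  (hrec : ∀ n, s (n + 1) = Int.fract (s n + ρ))

include hρ0 hρ1 hs0 hs1 hrec

lemma walk_exists_wrap : ∃ n, 1 ≤ s n + ρ := by
  by_contra hc
  push_neg at hc
  have hmono : ∀ n, s n = s 0 + n * ρ := by
    intro n
    induction n with
    | zero => simp
    | succ n ih =>
      rw [hrec n, Int.fract_eq_self.2 ⟨by linarith [hs0 n], hc n⟩, ih]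
      push_cast; ring
  obtain ⟨n, hn⟩ := exists_nat_gt (1 / ρ)
  have : 1 / ρ * ρ < n * ρ := by nlinarith
  rw [one_div_mul_cancel hρ0.ne'] at this
  have := hs1 n
  rw [hmono n] at this
  linarith [hs0 0]

lemma walk_exists_low : ∃ n, s n < 1 - ρ := by
  by_contra hc
  push_neg at hc
  have hmono : ∀ n, s n = s 0 - n * (1 - ρ) := by
    intro n
    induction n with
    | zero => simp
    | succ n ih =>
      have h1 : 1 ≤ s n + ρ := by linarith [hc n]
      have h2 : s n + ρ < 2 := by linarith [hs1 n]
      have : Int.fract (s n + ρ) = s n + ρ - 1 :=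
        fract_eq_sub_one (by linarith) (by linarith)
      rw [hrec n, this, ih]
      push_cast; ring
  obtain ⟨n, hn⟩ := exists_nat_gt (1 / (1 - ρ))
  have : 1 / (1-ρ) * (1-ρ) < n * (1-ρ) := by nlinarith
  rw [one_div_mul_cancel (by linarith : (1:ℝ) - ρ ≠ 0)] at this
  have := hs0 n
  rw [hmono n] at this
  linarith [hs1 0]

end walk

lemma orbit_fract_rec (t γ : ℝ) (m : ℕ) (n : ℕ) :
    Int.fract (t + (↑((n+1) * m) : ℝ) * γ) =
      Int.fract (Int.fract (t + (↑(n * m) : ℝ) * γ) + Int.fract ((m:ℝ) * γ)) := by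
  rw [fract_fract_add, fract_add_fract]
  congr 1
  push_cast; ring

lemma exists_fract_orbit_lt {γ : ℝ} (hγ : Irrational γ) (t : ℝ) {ε : ℝ} (hε : 0 < ε) :
    ∃ n : ℕ, Int.fract (t + n * γ) < ε := by
  obtain ⟨m, hm, hρ0, hρε⟩ := exists_small_step hγ hε
  set ρ := Int.fract ((m:ℝ) * γ) with hρ
  have hρ1 : ρ < 1 := Int.fract_lt_one _
  set s : ℕ → ℝ := fun n => Int.fract (t + (↑(n * m) : ℝ) * γ) with hs
  have hs0 : ∀ n, 0 ≤ s n := fun n => Int.fract_nonneg _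
  have hs1 : ∀ n, s n < 1 := fun n => Int.fract_lt_one _
  have hrec : ∀ n, s (n + 1) = Int.fract (s n + ρ) := fun n => orbit_fract_rec t γ m n
  rcases hρε with h | h
  · obtain ⟨n, hn⟩ := walk_exists_wrap hρ0 hρ1 s hs0 hs1 hrec
    refine ⟨(n+1) * m, ?_⟩
    have h2 : s (n+1) = s n + ρ - 1 := by
      rw [hrec n, fract_eq_sub_one (by linarith) (by linarith [hs1 n, hρ1])]
    have hlt : s (n+1) < ε := by rw [h2]; linarith [hs1 n]
    exact hlt
  · obtain ⟨n, hn⟩ := walk_exists_low hρ0 hρ1 s hs0 hs1 hrec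
    have : s n < ε := lt_trans hn (by linarith)
    exact ⟨n * m, this⟩

lemma exists_fract_orbit_ge {γ : ℝ} (hγ : Irrational γ) (t : ℝ) {ε : ℝ} (hε : 0 < ε)
    (hε1 : ε ≤ 1) : ∃ n : ℕ, 1 - ε ≤ Int.fract (t + n * γ) := by
  obtain ⟨m, hm, hρ0, hρε⟩ := exists_small_step hγ hε
  set ρ := Int.fract ((m:ℝ) * γ) with hρ
  have hρ1 : ρ < 1 := Int.fract_lt_one _
  set s : ℕ → ℝ := fun n => Int.fract (t + (↑(n * m) : ℝ) * γ) with hs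
  have hs0 : ∀ n, 0 ≤ s n := fun n => Int.fract_nonneg _
  have hs1 : ∀ n, s n < 1 := fun n => Int.fract_lt_one _
  have hrec : ∀ n, s (n + 1) = Int.fract (s n + ρ) := fun n => orbit_fract_rec t γ m n
  rcases hρε with h | h
  · by_contra hc
    push_neg at hc
    have hc' : ∀ n, s n < 1 - ε := fun n => hc (n * m)
    have hmono : ∀ n, s n = s 0 + n * ρ := by
      intro n
      induction n with
      | zero => simp
      | succ n ih =>
        rw [hrec n, Int.fract_eq_self.2 ⟨by linarith [hs0 n], by linarith [hc' n]⟩, ih]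
        push_cast; ring
    obtain ⟨n, hn⟩ := exists_nat_gt (1 / ρ)
    have : 1 / ρ * ρ < n * ρ := by nlinarith
    rw [one_div_mul_cancel hρ0.ne'] at this
    have := hs1 n
    rw [hmono n] at this
    linarith [hs0 0]
  · obtain ⟨n, hn⟩ := walk_exists_low hρ0 hρ1 s hs0 hs1 hrec
    refine ⟨(n+1) * m, ?_⟩
    have : s (n+1) = s n + ρ := by
      rw [hrec n, Int.fract_eq_self.2 ⟨by linarith [hs0 n], by linarith⟩]
    have : 1 - ε ≤ s (n+1) := by rw [this]; linarith [hs0 n]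
    exact this

lemma floor_q_nonneg (q : ℕ) {t : ℝ} (h0 : 0 ≤ t) : 0 ≤ ⌊(q:ℝ)*t⌋ :=
  Int.floor_nonneg.2 (by positivity)

lemma floor_q_lt (q : ℕ) (hq : 0 < q) {t : ℝ} (h0 : 0 ≤ t) (h1 : t < 1) : ⌊(q:ℝ)*t⌋ < q := by
  apply Int.floor_lt.2
  push_cast
  have hq' : (0:ℝ) < q := by exact_mod_cast hq
  nlinarith

lemma cell_decomp (q : ℕ) (hq : 0 < q) {t : ℝ} (h0 : 0 ≤ t) (h1 : t < 1) :
    t = ((⌊(q:ℝ)*t⌋.toNat : ℝ) + Int.fract ((q:ℝ)*t)) / q := by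
  have hq' : (0:ℝ) < q := by exact_mod_cast hq
  have hkk : ((⌊(q:ℝ)*t⌋.toNat : ℕ) : ℝ) = ((⌊(q:ℝ)*t⌋ : ℤ) : ℝ) := by
    exact_mod_cast Int.toNat_of_nonneg (floor_q_nonneg q h0)
  rw [eq_div_iff hq'.ne', Int.fract, hkk]
  ring

lemma rotStep (q p : ℕ) (hq : 0 < q) {t : ℝ} (h0 : 0 ≤ t) (h1 : t < 1) :
    Int.fract ((q:ℝ) * Int.fract (t + (p:ℝ) / q)) = Int.fract ((q:ℝ) * t) ∧
    ⌊(q:ℝ) * Int.fract (t + (p:ℝ) / q)⌋.toNat = (⌊(q:ℝ) * t⌋.toNat + p) % q := by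
  have hq' : (0:ℝ) < q := by exact_mod_cast hq
  have hfr : (q:ℝ) * (t + (p:ℝ)/q) = (q:ℝ) * t + (p:ℝ) := by field_simp
  constructor
  · rw [fract_nat_mul_fract, hfr, show (p:ℝ) = ((p:ℕ):ℝ) by norm_num, Int.fract_add_natCast]
  · set k : ℕ := ⌊(q:ℝ)*t⌋.toNat with hk
    have hkk : (k : ℤ) = ⌊(q:ℝ)*t⌋ := Int.toNat_of_nonneg (floor_q_nonneg q h0)
    have hψ : Int.fract ((q:ℝ)*t) = (q:ℝ)*t - k := by
      rw [Int.fract, ← hkk]; push_cast; ring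
    have hψ0 : (0:ℝ) ≤ (q:ℝ)*t - k := by rw [← hψ]; exact Int.fract_nonneg _
    have hψ1 : (q:ℝ)*t - k < 1 := by rw [← hψ]; exact Int.fract_lt_one _
    set j : ℕ := (k + p) / q with hj
    set r : ℕ := (k + p) % q with hr
    have hdm : k + p = q * j + r := (Nat.div_add_mod (k+p) q).symm
    have hdmR : (k:ℝ) + p = (q:ℝ) * j + r := by exact_mod_cast hdm
    have hmq : r < q := Nat.mod_lt _ hq
    have hmqR : (r:ℝ) < (q:ℝ) := by exact_mod_cast hmq
    have hr0R : (0:ℝ) ≤ r := Nat.cast_nonneg r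
    have hjZR : (((j:ℕ):ℤ):ℝ) = (j:ℝ) := by push_cast; ring
    have hfloor : ⌊t + (p:ℝ)/q⌋ = ((j:ℕ):ℤ) := by
      rw [Int.floor_eq_iff]
      rw [hjZR]
      constructor
      · rw [← mul_le_mul_iff_right₀ hq', hfr]
        linarith
      · rw [← mul_lt_mul_iff_right₀ hq', hfr]
        have h5 : (r:ℝ) + 1 ≤ q := by exact_mod_cast hmq
        rw [mul_add, mul_one]
        linarith
    have hval : (q:ℝ) * Int.fract (t + (p:ℝ)/q) = (r:ℝ) + ((q:ℝ)*t - k) := by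
      rw [Int.fract, hfloor, mul_sub, hfr, hjZR]
      linarith
    rw [hval]
    have hrZR : (((r:ℕ):ℤ):ℝ) = (r:ℝ) := by push_cast; ring
    have hfl2 : ⌊(r:ℝ) + ((q:ℝ)*t - k)⌋ = ((r:ℕ):ℤ) := by
      rw [Int.floor_eq_iff, hrZR]
      exact ⟨by linarith, by linarith⟩
    rw [hfl2]
    omega

section
variable {α x₁ x₂ t : ℝ}

lemma Mmap_U (h : t < x₁) : Mmap α x₁ x₂ t = Int.fract (t + α + x₂ - x₁) := if_pos h

lemma Mmap_H (h1 : x₁ ≤ t) (h2 : t < x₂) : Mmap α x₁ x₂ t = t := by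
  rw [Mmap, if_neg (not_lt.2 h1), if_pos h2]

lemma Mmap_V (h1 : x₁ ≤ t) (h2 : x₂ ≤ t) : Mmap α x₁ x₂ t = Int.fract (t + α) := by
  rw [Mmap, if_neg (not_lt.2 h1), if_neg (not_lt.2 h2)]

lemma Sset_not_H (h : t ∈ Sset α x₁ x₂) : t ∉ Set.Ico x₁ x₂ := by
  have := h.2 0; simpa using this

lemma Sset_map (h : t ∈ Sset α x₁ x₂) : Mmap α x₁ x₂ t ∈ Sset α x₁ x₂ := by
  refine ⟨?_, fun n => ?_⟩
  · rcases lt_or_ge t x₁ with h1 | h1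
    · rw [Mmap_U h1]; exact ⟨Int.fract_nonneg _, Int.fract_lt_one _⟩
    · rcases lt_or_ge t x₂ with h2 | h2
      · exact absurd ⟨h1, h2⟩ (Sset_not_H h)
      · rw [Mmap_V h1 h2]
        exact ⟨Int.fract_nonneg _, Int.fract_lt_one _⟩
  · rw [← Function.iterate_succ_apply]
    exact h.2 (n + 1)

lemma Sset_iterate (h : t ∈ Sset α x₁ x₂) (n : ℕ) : (Mmap α x₁ x₂)^[n] t ∈ Sset α x₁ x₂ := by
  induction n with
  | zero => simpa using h
  | succ n ih => rw [Function.iterate_succ_apply']; exact Sset_map ih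

end

lemma reach {M : ℝ → ℝ} {q p : ℕ} (hq : 0 < q) (hcop : Nat.Coprime p q) (c₀ : ℕ) (hc₀ : c₀ < q)
    (P : ℝ → Prop) (cell : ℝ → ℕ) (hcell : ∀ t, P t → cell t < q)
    (step : ∀ t, P t → cell t ≠ c₀ → P (M t) ∧ cell (M t) = (cell t + p) % q) :
    ∀ t, P t → ∃ n, P (M^[n] t) ∧ cell (M^[n] t) = c₀ := by
  have aux : ∀ j t, P t → (cell t + j * p) % q = c₀ % q →
      ∃ n, P (M^[n] t) ∧ cell (M^[n] t) = c₀ := by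
    intro j
    induction j with
    | zero =>
      intro t ht h0
      simp only [Nat.zero_mul, Nat.add_zero] at h0
      rw [Nat.mod_eq_of_lt (hcell t ht), Nat.mod_eq_of_lt hc₀] at h0
      exact ⟨0, by simpa using ht, by simpa using h0⟩
    | succ j ih =>
      intro t ht hmod
      by_cases hc : cell t = c₀
      · exact ⟨0, by simpa using ht, by simpa using hc⟩
      · obtain ⟨hP, hcl⟩ := step t ht hc
        obtain ⟨n, hn1, hn2⟩ := ih (M t) hP (by
          rw [hcl, Nat.mod_add_mod, show cell t + p + j * p = cell t + (j+1) * p by ring]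
          exact hmod)
        exact ⟨n + 1, by rwa [Function.iterate_succ_apply], by rwa [Function.iterate_succ_apply]⟩
  intro t ht
  obtain ⟨j, hj⟩ := exists_add_mul_mod p q hq hcop (cell t) c₀
  exact aux j t ht hj

set_option maxHeartbeats 1000000 in
lemma Sset_char_ii (α x₁ x₂ : ℝ) (p q : ℕ) (hx0 : 0 ≤ x₁) (hx : x₁ < x₂)
    (hpq : p < q) (hcop : Nat.Coprime p q) (hαeq : α = (p:ℝ)/q) (hx2q : x₂ < 1/(q:ℝ)) :
    Sset α x₁ x₂ = {t : ℝ | 0 ≤ t ∧ t < 1 ∧ (q:ℝ)*x₂ ≤ Int.fract ((q:ℝ)*t)} := by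
  have hq : 0 < q := Nat.zero_lt_of_lt hpq
  have hq' : (0:ℝ) < q := by exact_mod_cast hq
  have hx2R : (q:ℝ)*x₂ < 1 := by
    rw [lt_div_iff₀ hq'] at hx2q; linarith
  have hx2pos : 0 < x₂ := lt_of_le_of_lt hx0 hx
  -- key : points with high phase are ≥ x₂
  have key : ∀ u : ℝ, 0 ≤ u → u < 1 → (q:ℝ)*x₂ ≤ Int.fract ((q:ℝ)*u) → x₂ ≤ u := by
    intro u hu0 hu1 hψu
    have hd := cell_decomp q hq hu0 hu1
    rw [hd, le_div_iff₀ hq']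
    have : (0:ℝ) ≤ ((⌊(q:ℝ)*u⌋.toNat : ℕ) : ℝ) := Nat.cast_nonneg _
    linarith
  ext t
  simp only [Set.mem_setOf_eq]
  constructor
  · -- S ⊆ phase set
    intro ht
    refine ⟨ht.1.1, ht.1.2, ?_⟩
    by_contra hlt
    push_neg at hlt
    set δ : ℝ := (q:ℝ)*x₂ - (q:ℝ)*x₁ with hδ
    have hδpos : 0 < δ := by
      rw [hδ]; nlinarith
    have step : ∀ s : ℝ, s ∈ Sset α x₁ x₂ → Int.fract ((q:ℝ)*s) < (q:ℝ)*x₂ →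
        ∃ s', s' ∈ Sset α x₁ x₂ ∧
          Int.fract ((q:ℝ)*s') = Int.fract ((q:ℝ)*s) + δ ∧
          Int.fract ((q:ℝ)*s') < (q:ℝ)*x₂ := by
      intro s hs hψs
      obtain ⟨n, hP, hc0⟩ := reach (M := Mmap α x₁ x₂) hq hcop 0 hq
        (fun u => u ∈ Sset α x₁ x₂ ∧ Int.fract ((q:ℝ)*u) = Int.fract ((q:ℝ)*s))
        (fun u => ⌊(q:ℝ)*u⌋.toNat)
        (by
          intro u hu
          show ⌊(q:ℝ)*u⌋.toNat < q
          have := floor_q_lt q hq hu.1.1.1 hu.1.1.2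
          omega)
        (by
          intro u hu hne
          have hne' : ⌊(q:ℝ)*u⌋.toNat ≠ 0 := hne
          have hu0 : (0:ℝ) ≤ u := hu.1.1.1
          have hu1 : u < 1 := hu.1.1.2
          have hfl1 : (1:ℤ) ≤ ⌊(q:ℝ)*u⌋ := by
            have := floor_q_nonneg q hu0
            omega
          have hqu1 : (1:ℝ) ≤ (q:ℝ)*u := by
            calc (1:ℝ) = ((1:ℤ):ℝ) := by norm_num
            _ ≤ (⌊(q:ℝ)*u⌋ : ℝ) := by exact_mod_cast hfl1
            _ ≤ (q:ℝ)*u := Int.floor_le _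
          have hux2 : x₂ ≤ u := by
            rw [lt_div_iff₀ hq'] at hx2q
            nlinarith
          have hMV : Mmap α x₁ x₂ u = Int.fract (u + (p:ℝ)/q) := by
            rw [Mmap_V (le_trans hx.le hux2) hux2, hαeq]
          obtain ⟨hr1, hr2⟩ := rotStep q p hq hu0 hu1
          refine ⟨⟨Sset_map hu.1, ?_⟩, ?_⟩
          · show Int.fract ((q:ℝ) * Mmap α x₁ x₂ u) = Int.fract ((q:ℝ)*s)
            rw [hMV, hr1, hu.2]
          · show ⌊(q:ℝ) * Mmap α x₁ x₂ u⌋.toNat = (⌊(q:ℝ)*u⌋.toNat + p) % q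
            rw [hMV, hr2])
        s ⟨hs, rfl⟩
      set u := (Mmap α x₁ x₂)^[n] s with hu
      obtain ⟨huS, hψu⟩ := hP
      have hu0 : (0:ℝ) ≤ u := huS.1.1
      have hu1 : u < 1 := huS.1.2
      have hfl0 : ⌊(q:ℝ)*u⌋ = 0 := by
        have := floor_q_nonneg q hu0
        omega
      have hquψ : Int.fract ((q:ℝ)*u) = (q:ℝ)*u := by
        rw [Int.fract, hfl0]; simp
      have hultx2 : u < x₂ := by
        have : (q:ℝ)*u < (q:ℝ)*x₂ := by rw [← hquψ, hψu]; exact hψs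
        nlinarith
      have hultx1 : u < x₁ := by
        by_contra hge
        push_neg at hge
        exact Sset_not_H huS ⟨hge, hultx2⟩
      have hMU : Mmap α x₁ x₂ u = Int.fract (u + α + x₂ - x₁) := Mmap_U hultx1
      refine ⟨Mmap α x₁ x₂ u, Sset_map huS, ?_, ?_⟩
      · rw [hMU, fract_nat_mul_fract]
        have harg : (q:ℝ) * (u + α + x₂ - x₁) = ((q:ℝ)*u + δ) + ((p:ℕ):ℝ) := by
          rw [hαeq, hδ]; field_simp; ring
        rw [harg, Int.fract_add_natCast]
        have hb1 : (0:ℝ) ≤ (q:ℝ)*u + δ := by positivity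
        have hqux1 : (q:ℝ)*u < (q:ℝ)*x₁ := by nlinarith
        have hb2 : (q:ℝ)*u + δ < 1 := by rw [hδ]; nlinarith
        rw [Int.fract_eq_self.2 ⟨hb1, hb2⟩, ← hψu, hquψ]
      · rw [hMU, fract_nat_mul_fract]
        have harg : (q:ℝ) * (u + α + x₂ - x₁) = ((q:ℝ)*u + δ) + ((p:ℕ):ℝ) := by
          rw [hαeq, hδ]; field_simp; ring
        rw [harg, Int.fract_add_natCast]
        have hb1 : (0:ℝ) ≤ (q:ℝ)*u + δ := by positivity
        have hqux1 : (q:ℝ)*u < (q:ℝ)*x₁ := by nlinarith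
        have hb2 : (q:ℝ)*u + δ < 1 := by rw [hδ]; nlinarith
        rw [Int.fract_eq_self.2 ⟨hb1, hb2⟩, hδ]
        nlinarith
    have desc : ∀ m : ℕ, ∃ s, s ∈ Sset α x₁ x₂ ∧
        Int.fract ((q:ℝ)*s) = Int.fract ((q:ℝ)*t) + m*δ ∧
        Int.fract ((q:ℝ)*s) < (q:ℝ)*x₂ := by
      intro m
      induction m with
      | zero => exact ⟨t, ht, by simp, hlt⟩
      | succ m ih =>
        obtain ⟨s, hs, heq, hsb⟩ := ih
        obtain ⟨s', hs', heq', hsb'⟩ := step s hs hsb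
        exact ⟨s', hs', by rw [heq', heq]; push_cast; ring, hsb'⟩
    obtain ⟨m, hm⟩ := exists_nat_gt ((q:ℝ)*x₂/δ)
    obtain ⟨s, _, heq, hsb⟩ := desc m
    have h1 : (q:ℝ)*x₂ < m*δ := by
      rw [div_lt_iff₀ hδpos] at hm; linarith
    have h2 : (0:ℝ) ≤ Int.fract ((q:ℝ)*t) := Int.fract_nonneg _
    linarith [heq ▸ hsb]
  · -- phase set ⊆ S
    rintro ⟨h0, h1, hψ⟩
    have inv : ∀ n : ℕ, 0 ≤ (Mmap α x₁ x₂)^[n] t ∧ (Mmap α x₁ x₂)^[n] t < 1 ∧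
        (q:ℝ)*x₂ ≤ Int.fract ((q:ℝ) * (Mmap α x₁ x₂)^[n] t) := by
      intro n
      induction n with
      | zero => exact ⟨h0, h1, by simpa using hψ⟩
      | succ n ih =>
        obtain ⟨ih0, ih1, ihψ⟩ := ih
        set u := (Mmap α x₁ x₂)^[n] t with hu
        have hux2 : x₂ ≤ u := key u ih0 ih1 ihψ
        have hM : Mmap α x₁ x₂ u = Int.fract (u + (p:ℝ)/q) := by
          rw [Mmap_V (le_trans hx.le hux2) hux2, hαeq]
        rw [Function.iterate_succ_apply', ← hu, hM]
        obtain ⟨hr1, _⟩ := rotStep q p hq ih0 ih1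
        exact ⟨Int.fract_nonneg _, Int.fract_lt_one _, by rw [hr1]; exact ihψ⟩
    refine ⟨⟨h0, h1⟩, fun n hin => ?_⟩
    obtain ⟨i0, i1, iψ⟩ := inv n
    exact absurd (key _ i0 i1 iψ) (not_le.2 hin.2)

set_option maxHeartbeats 1000000 in
lemma Sset_char_i (α x₁ x₂ : ℝ) (p q : ℕ) (hx0 : 0 ≤ x₁) (hx : x₁ < x₂) (hx2 : x₂ ≤ 1)
    (hpq : p < q) (hcop : Nat.Coprime p q) (hβeq : Int.fract (α + x₂ - x₁) = (p:ℝ)/q)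
    (hx1q : ((q:ℝ)-1)/q < x₁) :
    Sset α x₁ x₂ = {t : ℝ | 0 ≤ t ∧ t < 1 ∧
      Int.fract ((q:ℝ)*t) < (q:ℝ)*x₁ - ((q:ℝ)-1)} := by
  have hq : 0 < q := Nat.zero_lt_of_lt hpq
  have hq' : (0:ℝ) < q := by exact_mod_cast hq
  have hq1 : (1:ℝ) ≤ q := by exact_mod_cast hq
  set L : ℝ := (q:ℝ)*x₁ - ((q:ℝ)-1) with hL
  have hLpos : 0 < L := by
    rw [hL]
    rw [div_lt_iff₀ hq'] at hx1q
    linarith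
  have hLlt : L < (q:ℝ)*x₂ - ((q:ℝ)-1) := by rw [hL]; nlinarith
  have hL1 : (q:ℝ)*x₂ - ((q:ℝ)-1) ≤ 1 := by nlinarith
  have hβdecomp : α + x₂ - x₁ = (p:ℝ)/q + ((⌊α + x₂ - x₁⌋ : ℤ):ℝ) := by
    rw [← hβeq, Int.fract]; ring
  set B : ℤ := ⌊α + x₂ - x₁⌋ with hB
  have hMU' : ∀ u : ℝ, u < x₁ → Mmap α x₁ x₂ u = Int.fract (u + (p:ℝ)/q) := by
    intro u hu
    rw [Mmap_U hu,
      show u + α + x₂ - x₁ = (u + (p:ℝ)/q) + ((B : ℤ):ℝ) by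
        rw [show u + α + x₂ - x₁ = u + (α + x₂ - x₁) by ring, hβdecomp]; ring,
      Int.fract_add_intCast]
  -- key : points with low phase are < x₁
  have key : ∀ u : ℝ, 0 ≤ u → u < 1 → Int.fract ((q:ℝ)*u) < L → u < x₁ := by
    intro u hu0 hu1 hψu
    have hd := cell_decomp q hq hu0 hu1
    rw [hd, div_lt_iff₀ hq']
    have hkq : ⌊(q:ℝ)*u⌋.toNat < q := by
      have := floor_q_lt q hq hu0 hu1
      omega
    have : ((⌊(q:ℝ)*u⌋.toNat : ℕ):ℝ) ≤ (q:ℝ) - 1 := by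
      have h2 : ⌊(q:ℝ)*u⌋.toNat + 1 ≤ q := hkq
      have : ((⌊(q:ℝ)*u⌋.toNat : ℕ):ℝ) + 1 ≤ (q:ℝ) := by exact_mod_cast h2
      linarith
    rw [hL] at hψu
    linarith
  ext t
  simp only [Set.mem_setOf_eq]
  constructor
  · -- S ⊆ phase set
    intro ht
    refine ⟨ht.1.1, ht.1.2, ?_⟩
    by_contra hge
    push_neg at hge
    set ε : ℝ := (q:ℝ)*x₂ - (q:ℝ)*x₁ with hε
    have hεpos : 0 < ε := by rw [hε]; nlinarith
    have step : ∀ s : ℝ, s ∈ Sset α x₁ x₂ → L ≤ Int.fract ((q:ℝ)*s) →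
        ∃ s', s' ∈ Sset α x₁ x₂ ∧
          Int.fract ((q:ℝ)*s') = Int.fract ((q:ℝ)*s) - ε ∧
          L ≤ Int.fract ((q:ℝ)*s') := by
      intro s hs hψs
      obtain ⟨n, hP, hcq⟩ := reach (M := Mmap α x₁ x₂) hq hcop (q-1) (by omega)
        (fun u => u ∈ Sset α x₁ x₂ ∧ Int.fract ((q:ℝ)*u) = Int.fract ((q:ℝ)*s))
        (fun u => ⌊(q:ℝ)*u⌋.toNat)
        (by
          intro u hu
          show ⌊(q:ℝ)*u⌋.toNat < q
          have := floor_q_lt q hq hu.1.1.1 hu.1.1.2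
          omega)
        (by
          intro u hu hne
          have hne' : ⌊(q:ℝ)*u⌋.toNat ≠ q - 1 := hne
          have hu0 : (0:ℝ) ≤ u := hu.1.1.1
          have hu1 : u < 1 := hu.1.1.2
          have hkq : ⌊(q:ℝ)*u⌋.toNat < q := by
            have := floor_q_lt q hq hu0 hu1
            omega
          have hk2 : ⌊(q:ℝ)*u⌋.toNat + 2 ≤ q := by omega
          have hk2R : ((⌊(q:ℝ)*u⌋.toNat : ℕ):ℝ) + 2 ≤ (q:ℝ) := by exact_mod_cast hk2
          have hux1 : u < x₁ := by
            have hd := cell_decomp q hq hu0 hu1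
            rw [hd, div_lt_iff₀ hq']
            rw [div_lt_iff₀ hq'] at hx1q
            have := Int.fract_lt_one ((q:ℝ)*u)
            linarith
          have hMV := hMU' u hux1
          obtain ⟨hr1, hr2⟩ := rotStep q p hq hu0 hu1
          refine ⟨⟨Sset_map hu.1, ?_⟩, ?_⟩
          · show Int.fract ((q:ℝ) * Mmap α x₁ x₂ u) = Int.fract ((q:ℝ)*s)
            rw [hMV, hr1, hu.2]
          · show ⌊(q:ℝ) * Mmap α x₁ x₂ u⌋.toNat = (⌊(q:ℝ)*u⌋.toNat + p) % q
            rw [hMV, hr2])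
        s ⟨hs, rfl⟩
      set u := (Mmap α x₁ x₂)^[n] s with hu
      obtain ⟨huS, hψu⟩ := hP
      have hu0 : (0:ℝ) ≤ u := huS.1.1
      have hu1 : u < 1 := huS.1.2
      have hflq : ⌊(q:ℝ)*u⌋ = (q:ℤ) - 1 := by
        have h1 := floor_q_nonneg q hu0
        have : ⌊(q:ℝ)*u⌋.toNat = q - 1 := hcq
        omega
      have hqm1R : (((q:ℤ) - 1 : ℤ):ℝ) = (q:ℝ) - 1 := by push_cast; ring
      have hquψ : (q:ℝ)*u = ((q:ℝ) - 1) + Int.fract ((q:ℝ)*u) := by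
        rw [Int.fract, hflq, hqm1R]; ring
      have hux1 : x₁ ≤ u := by
        have : (q:ℝ)*x₁ ≤ (q:ℝ)*u := by
          rw [hquψ, hψu]
          rw [hL] at hψs
          linarith
        nlinarith
      have hux2 : x₂ ≤ u := by
        by_contra hlt2
        push_neg at hlt2
        exact Sset_not_H huS ⟨hux1, hlt2⟩
      have hMV : Mmap α x₁ x₂ u = Int.fract (u + α) := Mmap_V hux1 hux2
      have hqx2 : (q:ℝ)*x₂ ≤ (q:ℝ)*u := by nlinarith
      -- value of new phase
      have hψlow : L ≤ Int.fract ((q:ℝ)*s) - ε := by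
        rw [hε, hL]
        have : (q:ℝ)*x₂ ≤ ((q:ℝ) - 1) + Int.fract ((q:ℝ)*s) := by
          rw [← hψu, ← hquψ]; exact hqx2
        linarith
      have hψhi : Int.fract ((q:ℝ)*s) - ε < 1 := by
        have := Int.fract_lt_one ((q:ℝ)*s)
        linarith
      refine ⟨Mmap α x₁ x₂ u, Sset_map huS, ?_, ?_⟩
      · rw [hMV, fract_nat_mul_fract]
        have hαval : (q:ℝ)*α = (p:ℝ) + (q:ℝ)*((B : ℤ):ℝ) - ε := by
          have : (q:ℝ)*(α + x₂ - x₁) = (q:ℝ)*((p:ℝ)/q) + (q:ℝ)*((B : ℤ):ℝ) := by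
            rw [mul_comm ((q:ℝ)) (α + x₂ - x₁), hβdecomp]; ring
          have h2 : (q:ℝ)*((p:ℝ)/q) = (p:ℝ) := by field_simp
          rw [hε]; linarith [this, h2.symm ▸ this]
        have harg : (q:ℝ)*(u + α) = (Int.fract ((q:ℝ)*s) - ε) +
            (((q:ℤ) - 1 + q*B + p : ℤ):ℝ) := by
          have hexp : (q:ℝ)*(u + α) = (q:ℝ)*u + (q:ℝ)*α := by ring
          rw [hexp, hquψ, hψu, hαval]
          push_cast
          ring
        rw [harg, Int.fract_add_intCast, Int.fract_eq_self.2 ⟨by linarith, hψhi⟩]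
      · rw [hMV, fract_nat_mul_fract]
        have hαval : (q:ℝ)*α = (p:ℝ) + (q:ℝ)*((B : ℤ):ℝ) - ε := by
          have : (q:ℝ)*(α + x₂ - x₁) = (q:ℝ)*((p:ℝ)/q) + (q:ℝ)*((B : ℤ):ℝ) := by
            rw [mul_comm ((q:ℝ)) (α + x₂ - x₁), hβdecomp]; ring
          have h2 : (q:ℝ)*((p:ℝ)/q) = (p:ℝ) := by field_simp
          rw [hε]; linarith [this, h2.symm ▸ this]
        have harg : (q:ℝ)*(u + α) = (Int.fract ((q:ℝ)*s) - ε) +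
            (((q:ℤ) - 1 + q*B + p : ℤ):ℝ) := by
          have hexp : (q:ℝ)*(u + α) = (q:ℝ)*u + (q:ℝ)*α := by ring
          rw [hexp, hquψ, hψu, hαval]
          push_cast
          ring
        rw [harg, Int.fract_add_intCast, Int.fract_eq_self.2 ⟨by linarith, hψhi⟩]
        exact hψlow
    have desc : ∀ m : ℕ, ∃ s, s ∈ Sset α x₁ x₂ ∧
        Int.fract ((q:ℝ)*s) = Int.fract ((q:ℝ)*t) - m*ε ∧
        L ≤ Int.fract ((q:ℝ)*s) := by
      intro m
      induction m with
      | zero => exact ⟨t, ht, by simp, hge⟩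
      | succ m ih =>
        obtain ⟨s, hs, heq, hsb⟩ := ih
        obtain ⟨s', hs', heq', hsb'⟩ := step s hs hsb
        exact ⟨s', hs', by rw [heq', heq]; push_cast; ring, hsb'⟩
    obtain ⟨m, hm⟩ := exists_nat_gt (1/ε)
    obtain ⟨s, _, heq, hsb⟩ := desc m
    have h1 : (1:ℝ) < m*ε := by
      rw [div_lt_iff₀ hεpos] at hm; linarith
    have h2 : Int.fract ((q:ℝ)*t) < 1 := Int.fract_lt_one _
    linarith [heq ▸ hsb]
  · -- phase set ⊆ S
    rintro ⟨h0, h1, hψ⟩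
    have inv : ∀ n : ℕ, 0 ≤ (Mmap α x₁ x₂)^[n] t ∧ (Mmap α x₁ x₂)^[n] t < 1 ∧
        Int.fract ((q:ℝ) * (Mmap α x₁ x₂)^[n] t) < L := by
      intro n
      induction n with
      | zero => exact ⟨h0, h1, by simpa using hψ⟩
      | succ n ih =>
        obtain ⟨ih0, ih1, ihψ⟩ := ih
        set u := (Mmap α x₁ x₂)^[n] t with hu
        have hux1 : u < x₁ := key u ih0 ih1 ihψ
        rw [Function.iterate_succ_apply', ← hu, hMU' u hux1]
        obtain ⟨hr1, _⟩ := rotStep q p hq ih0 ih1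
        exact ⟨Int.fract_nonneg _, Int.fract_lt_one _, by rw [hr1]; exact ihψ⟩
    refine ⟨⟨h0, h1⟩, fun n hin => ?_⟩
    obtain ⟨i0, i1, iψ⟩ := inv n
    exact absurd (key _ i0 i1 iψ) (not_lt.2 hin.1)

lemma mem_biUnion_ii (q : ℕ) (hq : 0 < q) (x₂ : ℝ) (hx2 : 0 ≤ x₂) (t : ℝ) :
    t ∈ ⋃ k ∈ Finset.range q, Ico (x₂ + (k:ℝ)/q) (((k:ℝ)+1)/q) ↔
      (0 ≤ t ∧ t < 1 ∧ (q:ℝ)*x₂ ≤ Int.fract ((q:ℝ)*t)) := by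
  have hq' : (0:ℝ) < q := by exact_mod_cast hq
  simp only [Set.mem_iUnion, Finset.mem_range, Set.mem_Ico, exists_prop]
  constructor
  · rintro ⟨k, hk, hl, hu⟩
    have hkq : (k:ℝ) + 1 ≤ q := by exact_mod_cast hk
    have e1 : (q:ℝ)*(x₂ + (k:ℝ)/q) = (q:ℝ)*x₂ + k := by field_simp
    have e2 : (q:ℝ)*(((k:ℝ)+1)/q) = (k:ℝ)+1 := by field_simp
    have hl' : (q:ℝ)*x₂ + k ≤ (q:ℝ)*t := by
      have := mul_le_mul_of_nonneg_left hl hq'.le; rw [e1] at this; linarith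
    have hu' : (q:ℝ)*t < (k:ℝ)+1 := by
      have := mul_lt_mul_of_pos_left hu hq'; rw [e2] at this; linarith
    have h0 : 0 ≤ t := le_trans (by positivity) hl
    have h1 : t < 1 := lt_of_lt_of_le hu (by rw [div_le_one hq']; linarith)
    have hcell : ⌊(q:ℝ)*t⌋ = (k:ℤ) := by
      rw [Int.floor_eq_iff]
      constructor
      · push_cast; nlinarith
      · push_cast; linarith
    rw [Int.fract, hcell]
    refine ⟨h0, h1, by push_cast; linarith⟩
  · rintro ⟨h0, h1, hψ⟩
    have hψ' : (q:ℝ)*x₂ ≤ (q:ℝ)*t - ((⌊(q:ℝ)*t⌋:ℤ):ℝ) := by rw [Int.fract] at hψ; exact hψ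
    have hkk : ((⌊(q:ℝ)*t⌋.toNat : ℕ):ℝ) = ((⌊(q:ℝ)*t⌋ : ℤ):ℝ) := by
      exact_mod_cast Int.toNat_of_nonneg (floor_q_nonneg q h0)
    refine ⟨⌊(q:ℝ)*t⌋.toNat, ?_, ?_, ?_⟩
    · have := floor_q_lt q hq h0 h1; omega
    · rw [hkk, ← mul_le_mul_iff_right₀ hq',
        show (q:ℝ)*(x₂ + ((⌊(q:ℝ)*t⌋:ℤ):ℝ)/q) = (q:ℝ)*x₂ + ((⌊(q:ℝ)*t⌋:ℤ):ℝ) by field_simp]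
      linarith
    · rw [hkk, lt_div_iff₀ hq', mul_comm]
      linarith [Int.lt_floor_add_one ((q:ℝ)*t)]

lemma mem_biUnion_i (q : ℕ) (hq : 0 < q) (x₁ : ℝ) (hx1 : x₁ ≤ 1) (t : ℝ) :
    t ∈ ⋃ k ∈ Finset.range q, Ico ((k:ℝ)/q) (((k:ℝ) - q + 1)/q + x₁) ↔
      (0 ≤ t ∧ t < 1 ∧ Int.fract ((q:ℝ)*t) < (q:ℝ)*x₁ - ((q:ℝ)-1)) := by
  have hq' : (0:ℝ) < q := by exact_mod_cast hq
  simp only [Set.mem_iUnion, Finset.mem_range, Set.mem_Ico, exists_prop]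
  constructor
  · rintro ⟨k, hk, hl, hu⟩
    have hkq : (k:ℝ) + 1 ≤ q := by exact_mod_cast hk
    have e1 : (q:ℝ)*((k:ℝ)/q) = (k:ℝ) := by field_simp
    have e2 : (q:ℝ)*(((k:ℝ) - q + 1)/q + x₁) = (k:ℝ) + ((q:ℝ)*x₁ - ((q:ℝ)-1)) := by
      field_simp; ring
    have hl' : (k:ℝ) ≤ (q:ℝ)*t := by
      have := mul_le_mul_of_nonneg_left hl hq'.le; rw [e1] at this; linarith
    have hu' : (q:ℝ)*t < (k:ℝ) + ((q:ℝ)*x₁ - ((q:ℝ)-1)) := by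
      have := mul_lt_mul_of_pos_left hu hq'; rw [e2] at this; linarith
    have h0 : 0 ≤ t := le_trans (by positivity) hl
    have h1 : t < 1 := by nlinarith
    have hcell : ⌊(q:ℝ)*t⌋ = (k:ℤ) := by
      rw [Int.floor_eq_iff]
      constructor
      · push_cast; linarith
      · push_cast; nlinarith
    rw [Int.fract, hcell]
    refine ⟨h0, h1, by push_cast; linarith⟩
  · rintro ⟨h0, h1, hψ⟩
    have hψ' : (q:ℝ)*t - ((⌊(q:ℝ)*t⌋:ℤ):ℝ) < (q:ℝ)*x₁ - ((q:ℝ)-1) := by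
      rw [Int.fract] at hψ; exact hψ
    have hkk : ((⌊(q:ℝ)*t⌋.toNat : ℕ):ℝ) = ((⌊(q:ℝ)*t⌋ : ℤ):ℝ) := by
      exact_mod_cast Int.toNat_of_nonneg (floor_q_nonneg q h0)
    refine ⟨⌊(q:ℝ)*t⌋.toNat, ?_, ?_, ?_⟩
    · have := floor_q_lt q hq h0 h1; omega
    · rw [hkk, div_le_iff₀ hq', mul_comm]
      exact Int.floor_le _
    · rw [hkk, ← mul_lt_mul_iff_right₀ hq',
        show (q:ℝ)*((((⌊(q:ℝ)*t⌋:ℤ):ℝ) - q + 1)/q + x₁) =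
          ((⌊(q:ℝ)*t⌋:ℤ):ℝ) + ((q:ℝ)*x₁ - ((q:ℝ)-1)) by field_simp; ring]
      linarith

lemma Ico_disj {a₁ a₂ b₁ b₂ : ℝ} (h : a₂ ≤ b₁) :
    Disjoint (Set.Ico a₁ a₂) (Set.Ico b₁ b₂) := by
  rw [Set.disjoint_left]
  rintro x ⟨_, h2⟩ ⟨h3, _⟩
  linarith

lemma vol_biUnion (m : ℕ) (a b : ℕ → ℝ) (c : ℝ)
    (hlen : ∀ k, k < m → b k - a k = c)
    (hd : ∀ i, i < m → ∀ j, j < m → i ≠ j → Disjoint (Ico (a i) (b i)) (Ico (a j) (b j))) :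
    volume (⋃ k ∈ Finset.range m, Ico (a k) (b k)) = m * ENNReal.ofReal c := by
  rw [measure_biUnion_finset (fun i hi j hj hij =>
      hd i (Finset.mem_range.1 (Finset.mem_coe.1 hi)) j (Finset.mem_range.1 (Finset.mem_coe.1 hj)) hij)
    (fun k _ => measurableSet_Ico)]
  rw [Finset.sum_congr rfl (fun k hk => by
    rw [Real.volume_Ico, hlen k (Finset.mem_range.1 hk)])]
  rw [Finset.sum_const, Finset.card_range, nsmul_eq_mul]

lemma Ymap_of_volumes (α x₁ x₂ : ℝ) (p q : ℕ) (c : ℝ) (hc : 0 < c) (hq : 0 < q) (hpq : p < q)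
    (h1 : volume (Sset α x₁ x₂ ∩ Set.Ico 0 α) = p * ENNReal.ofReal c)
    (h2 : volume (Sset α x₁ x₂) = q * ENNReal.ofReal c) :
    Ymap α x₁ x₂ α = (p:ℝ)/q := by
  have hq' : (0:ℝ) < q := by exact_mod_cast hq
  rw [Ymap, h1, h2]
  rw [ENNReal.toReal_mul, ENNReal.toReal_mul, ENNReal.toReal_natCast, ENNReal.toReal_natCast,
    ENNReal.toReal_ofReal hc.le]
  rw [mul_div_mul_right _ _ hc.ne']
  exact Int.fract_eq_self.2 ⟨by positivity, by rw [div_lt_one hq']; exact_mod_cast hpq⟩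

set_option maxHeartbeats 800000 in
lemma Ymap_val_ii (α x₁ x₂ : ℝ) (p q : ℕ) (hx0 : 0 ≤ x₁) (hx : x₁ < x₂)
    (hpq : p < q) (hαeq : α = (p:ℝ)/q) (hx2q : x₂ < 1/(q:ℝ))
    (hSeq : Sset α x₁ x₂ = ⋃ k ∈ Finset.range q, Ico (x₂ + (k:ℝ)/q) (((k:ℝ)+1)/q)) :
    Ymap α x₁ x₂ α = (p:ℝ)/q := by
  have hq : 0 < q := Nat.zero_lt_of_lt hpq
  have hq' : (0:ℝ) < q := by exact_mod_cast hq
  have hx2pos : 0 < x₂ := lt_of_le_of_lt hx0 hx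
  have hc : 0 < 1/(q:ℝ) - x₂ := by linarith
  have hdisj : ∀ i, i < q → ∀ j, j < q → i ≠ j →
      Disjoint (Ico (x₂ + (i:ℝ)/q) (((i:ℝ)+1)/q)) (Ico (x₂ + (j:ℝ)/q) (((j:ℝ)+1)/q)) := by
    have base : ∀ i j : ℕ, i < j →
        Disjoint (Ico (x₂ + (i:ℝ)/q) (((i:ℝ)+1)/q)) (Ico (x₂ + (j:ℝ)/q) (((j:ℝ)+1)/q)) := by
      intro i j hij
      apply Ico_disj
      have h1 : ((i:ℝ)+1) ≤ j := by exact_mod_cast hij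
      have : ((i:ℝ)+1)/q ≤ (j:ℝ)/q := by gcongr
      linarith
    intro i _ j _ hij
    rcases lt_or_gt_of_ne hij with h | h
    · exact base i j h
    · exact (base j i h).symm
  have hlen : ∀ k, k < q → ((k:ℝ)+1)/q - (x₂ + (k:ℝ)/q) = 1/(q:ℝ) - x₂ := by
    intro k _
    field_simp
    ring
  have hvolS : volume (Sset α x₁ x₂) = q * ENNReal.ofReal (1/(q:ℝ) - x₂) := by
    rw [hSeq]
    exact vol_biUnion q _ _ _ hlen hdisj
  have hint : Sset α x₁ x₂ ∩ Set.Ico 0 α = ⋃ k ∈ Finset.range p,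
      Ico (x₂ + (k:ℝ)/q) (((k:ℝ)+1)/q) := by
    rw [hSeq]
    ext t
    simp only [Set.mem_inter_iff, Set.mem_iUnion, Finset.mem_range, Set.mem_Ico, exists_prop]
    constructor
    · rintro ⟨⟨k, hk, hl, hu⟩, _, hα⟩
      refine ⟨k, ?_, hl, hu⟩
      by_contra hkp
      push_neg at hkp
      have h1 : ((p:ℝ))/q ≤ (k:ℝ)/q := by gcongr
      rw [hαeq] at hα
      linarith
    · rintro ⟨k, hk, hl, hu⟩
      have h1 : ((k:ℝ)+1)/q ≤ (p:ℝ)/q := by gcongr; exact_mod_cast hk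
      refine ⟨⟨k, hk.trans hpq, hl, hu⟩, le_trans (by positivity) hl, ?_⟩
      rw [hαeq]
      linarith
  have hvolI : volume (Sset α x₁ x₂ ∩ Set.Ico 0 α) = p * ENNReal.ofReal (1/(q:ℝ) - x₂) := by
    rw [hint]
    exact vol_biUnion p _ _ _ (fun k hk => hlen k (hk.trans hpq))
      (fun i hi j hj hij => hdisj i (hi.trans hpq) j (hj.trans hpq) hij)
  exact Ymap_of_volumes α x₁ x₂ p q _ hc hq hpq hvolI hvolS

set_option maxHeartbeats 800000 in
lemma Ymap_val_i (α x₁ x₂ : ℝ) (p q : ℕ) (hα0 : 0 ≤ α) (hα1 : α < 1) (hx0 : 0 ≤ x₁)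
    (hx : x₁ < x₂) (hx2 : x₂ ≤ 1) (hpq : p < q) (hcop : Nat.Coprime p q)
    (hβeq : Int.fract (α + x₂ - x₁) = (p:ℝ)/q) (hx1q : ((q:ℝ)-1)/q < x₁)
    (hSeq : Sset α x₁ x₂ = ⋃ k ∈ Finset.range q, Ico ((k:ℝ)/q) (((k:ℝ)-q+1)/q + x₁)) :
    Ymap α x₁ x₂ α = (p:ℝ)/q := by
  have hq : 0 < q := Nat.zero_lt_of_lt hpq
  have hq' : (0:ℝ) < q := by exact_mod_cast hq
  have hx1le : x₁ ≤ 1 := le_trans hx.le hx2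
  set c : ℝ := x₁ - ((q:ℝ)-1)/q with hcdef
  have hc : 0 < c := by rw [hcdef]; linarith
  have hlen : ∀ k, k < q → (((k:ℝ)-q+1)/q + x₁) - (k:ℝ)/q = c := by
    intro k _
    rw [hcdef]
    field_simp
    ring
  have hdisj : ∀ i, i < q → ∀ j, j < q → i ≠ j →
      Disjoint (Ico ((i:ℝ)/q) (((i:ℝ)-q+1)/q + x₁)) (Ico ((j:ℝ)/q) (((j:ℝ)-q+1)/q + x₁)) := by
    have base : ∀ i j : ℕ, i < j →
        Disjoint (Ico ((i:ℝ)/q) (((i:ℝ)-q+1)/q + x₁)) (Ico ((j:ℝ)/q) (((j:ℝ)-q+1)/q + x₁)) := by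
      intro i j hij
      apply Ico_disj
      have e1 : (q:ℝ)*(((i:ℝ)-q+1)/q + x₁) = (i:ℝ) - q + 1 + q*x₁ := by field_simp
      have e2 : (q:ℝ)*((j:ℝ)/q) = j := by field_simp
      rw [← mul_le_mul_iff_right₀ hq', e1, e2]
      have h1 : (i:ℝ)+1 ≤ j := by exact_mod_cast hij
      have h2 : (q:ℝ)*x₁ ≤ q*1 := mul_le_mul_of_nonneg_left hx1le hq'.le
      linarith
    intro i _ j _ hij
    rcases lt_or_gt_of_ne hij with h | h
    · exact base i j h
    · exact (base j i h).symm
  have hvolS : volume (Sset α x₁ x₂) = q * ENNReal.ofReal c := by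
    rw [hSeq]
    exact vol_biUnion q _ _ _ hlen hdisj
  by_cases hp : p = 0
  · -- p = 0, q = 1
    subst hp
    have hq1 : q = 1 := (Nat.coprime_zero_left q).mp hcop
    subst hq1
    have hβ0 : Int.fract (α + x₂ - x₁) = 0 := by
      rw [hβeq]; norm_num
    have hBval : α + x₂ - x₁ = ((⌊α + x₂ - x₁⌋ : ℤ):ℝ) := by
      have := Int.fract_add_floor (α + x₂ - x₁)
      rw [hβ0] at this; linarith
    have hB1 : (⌊α + x₂ - x₁⌋ : ℤ) = 1 := by
      have h0 : (0:ℝ) < ((⌊α + x₂ - x₁⌋ : ℤ):ℝ) := by rw [← hBval]; linarith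
      have h2 : ((⌊α + x₂ - x₁⌋ : ℤ):ℝ) < 2 := by rw [← hBval]; linarith
      have h0' : (0:ℤ) < ⌊α + x₂ - x₁⌋ := by exact_mod_cast h0
      have h2' : (⌊α + x₂ - x₁⌋ : ℤ) < 2 := by exact_mod_cast h2
      omega
    have hαval : α = 1 - x₂ + x₁ := by
      rw [hB1] at hBval; push_cast at hBval; linarith
    have hx1α : x₁ ≤ α := by rw [hαval]; linarith
    have hSsub : Sset α x₁ x₂ ⊆ Set.Ico 0 α := by
      rw [hSeq]
      intro t ht
      simp only [Set.mem_iUnion, Finset.mem_range, Set.mem_Ico, exists_prop, Nat.lt_one_iff]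
        at ht
      obtain ⟨k, hk, hl, hu⟩ := ht
      subst hk
      push_cast at hl hu
      norm_num at hl hu
      exact ⟨hl, by linarith⟩
    have hint : Sset α x₁ x₂ ∩ Set.Ico 0 α = Sset α x₁ x₂ := Set.inter_eq_left.2 hSsub
    rw [Ymap, hint, hvolS]
    have hcc : c = x₁ := by rw [hcdef]; norm_num
    rw [ENNReal.toReal_mul, ENNReal.toReal_natCast, ENNReal.toReal_ofReal hc.le]
    rw [div_self (by push_cast; nlinarith : ((1:ℕ):ℝ) * c ≠ 0)]
    rw [Int.fract_one]
    norm_num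
  · -- p ≥ 1
    have hp1 : 1 ≤ p := Nat.one_le_iff_ne_zero.2 hp
    have hp1R : (1:ℝ) ≤ p := by exact_mod_cast hp1
    have hx1q' : 1 - x₁ < 1/(q:ℝ) := by
      rw [div_lt_iff₀ hq'] at hx1q
      rw [lt_div_iff₀ hq']
      linarith
    have hBval : α + x₂ - x₁ = (p:ℝ)/q + ((⌊α + x₂ - x₁⌋ : ℤ):ℝ) := by
      have := Int.fract_add_floor (α + x₂ - x₁)
      rw [hβeq] at this; linarith
    have hB0 : (⌊α + x₂ - x₁⌋ : ℤ) = 0 := by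
      have hpq' : (p:ℝ)/q < 1 := by rw [div_lt_one hq']; exact_mod_cast hpq
      have hpq1 : 1/(q:ℝ) ≤ (p:ℝ)/q := by gcongr
      have h0 : (0:ℝ) < (p:ℝ)/q + ((⌊α + x₂ - x₁⌋ : ℤ):ℝ) := by rw [← hBval]; linarith
      have h2 : (p:ℝ)/q + ((⌊α + x₂ - x₁⌋ : ℤ):ℝ) < 1 + 1/(q:ℝ) := by
        rw [← hBval]; linarith
      have hl : (-1:ℝ) < ((⌊α + x₂ - x₁⌋ : ℤ):ℝ) := by
        have : 0 < (p:ℝ)/q := by positivity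
        linarith
      have hr : ((⌊α + x₂ - x₁⌋ : ℤ):ℝ) < 1 := by linarith
      have hl' : (-1:ℤ) < ⌊α + x₂ - x₁⌋ := by exact_mod_cast hl
      have hr' : (⌊α + x₂ - x₁⌋ : ℤ) < 1 := by exact_mod_cast hr
      omega
    have hαval : α = (p:ℝ)/q - (x₂ - x₁) := by
      rw [hB0] at hBval; push_cast at hBval; linarith
    have hint : Sset α x₁ x₂ ∩ Set.Ico 0 α = ⋃ k ∈ Finset.range p,
        Ico ((k:ℝ)/q) (((k:ℝ)-q+1)/q + x₁) := by
      rw [hSeq]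
      ext t
      simp only [Set.mem_inter_iff, Set.mem_iUnion, Finset.mem_range, Set.mem_Ico, exists_prop]
      constructor
      · rintro ⟨⟨k, hk, hl, hu⟩, _, hα⟩
        refine ⟨k, ?_, hl, hu⟩
        by_contra hkp
        push_neg at hkp
        have h1 : ((p:ℝ))/q ≤ (k:ℝ)/q := by gcongr
        rw [hαval] at hα
        linarith
      · rintro ⟨k, hk, hl, hu⟩
        have hk1 : (k:ℝ)+1 ≤ p := by exact_mod_cast hk
        have hup : ((k:ℝ)-q+1)/q + x₁ ≤ α := by
          rw [hαval]
          have e1 : (q:ℝ)*(((k:ℝ)-q+1)/q + x₁) = (k:ℝ) - q + 1 + q*x₁ := by field_simp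
          have e2 : (q:ℝ)*((p:ℝ)/q - (x₂ - x₁)) = (p:ℝ) - q*x₂ + q*x₁ := by field_simp; ring
          rw [← mul_le_mul_iff_right₀ hq', e1, e2]
          have h2 : (q:ℝ)*x₂ ≤ q*1 := mul_le_mul_of_nonneg_left hx2 hq'.le
          linarith
        exact ⟨⟨k, hk.trans hpq, hl, hu⟩, le_trans (by positivity) hl, lt_of_lt_of_le hu hup⟩
    have hvolI : volume (Sset α x₁ x₂ ∩ Set.Ico 0 α) = p * ENNReal.ofReal c := by
      rw [hint]
      exact vol_biUnion p _ _ _ (fun k hk => hlen k (hk.trans hpq))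
        (fun i hi j hj hij => hdisj i (hi.trans hpq) j (hj.trans hpq) hij)
    exact Ymap_of_volumes α x₁ x₂ p q _ hc hq hpq hvolI hvolS

-- given a rational rotation by p/q (reduced) hitting values ≥ x2 along a ℕ-orbit,
-- the orbit contains fract(q t)/q.
lemma orbit_attains (p q : ℕ) (hq : 0 < q) (hcop : Nat.Coprime p q) (t : ℝ)
    (h0 : 0 ≤ t) (h1 : t < 1) (m : ℕ) (hm : m < q) :
    ∃ n : ℕ, Int.fract (t + n * ((p:ℝ)/q)) =
      Int.fract (t + (m:ℝ)/q) := by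
  obtain ⟨n, hn⟩ := exists_add_mul_mod p q hq hcop 0 m
  simp only [Nat.zero_add] at hn
  rw [Nat.mod_eq_of_lt hm] at hn
  refine ⟨n, ?_⟩
  have hq' : (0:ℝ) < q := by exact_mod_cast hq
  have hdm : n * p = q * ((n*p)/q) + m := by rw [← hn]; exact (Nat.div_add_mod _ q).symm
  have hR : (n:ℝ)*(p:ℝ) = (q:ℝ)*(((n*p)/q : ℕ):ℝ) + m := by exact_mod_cast hdm
  have hcast : (n:ℝ) * ((p:ℝ)/q) = (m:ℝ)/q + (((n*p)/q : ℕ):ℝ) := by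
    field_simp
    linarith
  rw [hcast, ← add_assoc, show t + (m:ℝ)/q + (((n*p)/q : ℕ):ℝ)
      = (t + (m:ℝ)/q) + ((((n*p)/q : ℕ):ℤ):ℝ) by rw [Int.cast_natCast], Int.fract_add_intCast]

set_option maxHeartbeats 800000 in
lemma onlyif_ii (α x₁ x₂ : ℝ) (hα0 : 0 ≤ α) (hα1 : α < 1) (hx0 : 0 ≤ x₁) (hx : x₁ < x₂)
    (hne : (Sset α x₁ x₂).Nonempty) (hsub : Sset α x₁ x₂ ⊆ Set.Ico x₂ 1) :
    ∃ p q : ℕ, p < q ∧ Nat.Coprime p q ∧ α = (p:ℝ)/q ∧ x₂ < 1/(q:ℝ) := by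
  obtain ⟨t, ht⟩ := hne
  have hx2pos : 0 < x₂ := lt_of_le_of_lt hx0 hx
  have horb : ∀ n : ℕ, (Mmap α x₁ x₂)^[n] t = Int.fract (t + n * α) := by
    intro n
    induction n with
    | zero =>
      simp only [Function.iterate_zero, id_eq, Nat.cast_zero, zero_mul, add_zero]
      exact (Int.fract_eq_self.2 ⟨ht.1.1, ht.1.2⟩).symm
    | succ n ih =>
      have hu : (Mmap α x₁ x₂)^[n] t ∈ Sset α x₁ x₂ := Sset_iterate ht n
      have hV := hsub hu
      rw [Function.iterate_succ_apply', Mmap_V (le_trans hx.le hV.1) hV.1, ih,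
        fract_fract_add]
      congr 1
      push_cast
      ring
  have hVn : ∀ n : ℕ, x₂ ≤ Int.fract (t + n * α) := by
    intro n
    have := (hsub (Sset_iterate ht n)).1
    rwa [horb n] at this
  by_cases hirr : Irrational α
  · obtain ⟨n, hn⟩ := exists_fract_orbit_lt hirr t hx2pos
    exact absurd (hVn n) (not_le.2 hn)
  · have hmem : α ∈ Set.range ((↑) : ℚ → ℝ) := not_not.mp hirr
    obtain ⟨r, hr⟩ := hmem
    have hr0 : (0:ℚ) ≤ r := by
      rw [← Rat.cast_le (K := ℝ)]
      push_cast
      rw [hr]; exact hα0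
    have hr1 : r < 1 := by
      rw [← Rat.cast_lt (K := ℝ)]
      push_cast
      rw [hr]; exact hα1
    have hnum0 : 0 ≤ r.num := Rat.num_nonneg.2 hr0
    set q : ℕ := r.den with hqdef
    set p : ℕ := r.num.toNat with hpdef
    have hq : 0 < q := r.pos
    have hq' : (0:ℝ) < q := by exact_mod_cast hq
    have hpnum : (p:ℤ) = r.num := Int.toNat_of_nonneg hnum0
    have hcop : Nat.Coprime p q := by
      have h := r.reduced
      have : p = r.num.natAbs := by omega
      rwa [← this] at h
    have hαpq : α = (p:ℝ)/q := by
      rw [← hr, Rat.cast_def]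
      congr 1
      exact_mod_cast hpnum.symm
    have hpq : p < q := by
      have hden : (0:ℚ) < (r.den:ℚ) := by exact_mod_cast hq
      have h2 : (r.num:ℚ)/(r.den:ℚ) < 1 := by rw [Rat.num_div_den r]; exact hr1
      have : (r.num:ℚ) < (r.den:ℚ) := (div_lt_one hden).1 h2
      have : r.num < (r.den:ℤ) := by exact_mod_cast this
      omega
    refine ⟨p, q, hpq, hcop, hαpq, ?_⟩
    -- find orbit point equal to fract(q t)/q
    have h0 : 0 ≤ t := ht.1.1
    have h1 : t < 1 := ht.1.2
    obtain ⟨k, hkdef⟩ : ∃ k : ℕ, ⌊(q:ℝ)*t⌋.toNat = k := ⟨_, rfl⟩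
    have hkq : k < q := by
      have := floor_q_lt q hq h0 h1
      omega
    have hq1R : (1:ℝ) ≤ q := by exact_mod_cast hq
    have hψ0 : 0 ≤ Int.fract ((q:ℝ)*t) := Int.fract_nonneg _
    have hψ1 : Int.fract ((q:ℝ)*t) < 1 := Int.fract_lt_one _
    have hd := cell_decomp q hq h0 h1
    rw [hkdef] at hd
    have hval : ∃ n : ℕ, Int.fract (t + n * α) = Int.fract ((q:ℝ)*t) / q := by
      by_cases hk0 : k = 0
      · refine ⟨0, ?_⟩
        simp only [Nat.cast_zero, zero_mul, add_zero]
        rw [Int.fract_eq_self.2 ⟨h0, h1⟩]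
        nth_rewrite 1 [hd]
        rw [hk0]
        norm_num
      · obtain ⟨n, hn⟩ := orbit_attains p q hq hcop t h0 h1 (q - k) (by omega)
        refine ⟨n, ?_⟩
        rw [hαpq, hn]
        have hqk : ((q - k : ℕ):ℝ) = (q:ℝ) - k := by
          push_cast [Nat.cast_sub hkq.le]
          ring
        have harg : t + ((q - k : ℕ):ℝ)/q = Int.fract ((q:ℝ)*t)/q + 1 := by
          rw [hqk]
          nth_rewrite 1 [hd]
          field_simp
          ring
        rw [harg, Int.fract_add_one, Int.fract_eq_self.2 ⟨by positivity, by
          rw [div_lt_one hq']; linarith⟩]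
    obtain ⟨n, hn⟩ := hval
    have := hVn n
    rw [hn] at this
    calc x₂ ≤ Int.fract ((q:ℝ)*t) / q := this
    _ < 1/q := by gcongr

set_option maxHeartbeats 800000 in
lemma onlyif_i (α x₁ x₂ : ℝ) (hα0 : 0 ≤ α) (hα1 : α < 1) (hx0 : 0 ≤ x₁) (hx : x₁ < x₂)
    (hx2 : x₂ ≤ 1)
    (hne : (Sset α x₁ x₂).Nonempty) (hsub : Sset α x₁ x₂ ⊆ Set.Ico 0 x₁) :
    ∃ p q : ℕ, p < q ∧ Nat.Coprime p q ∧ Int.fract (α + x₂ - x₁) = (p:ℝ)/q ∧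
      ((q:ℝ)-1)/q < x₁ := by
  obtain ⟨t, ht⟩ := hne
  have hx11 : x₁ < 1 := lt_of_lt_of_le hx hx2
  set β : ℝ := α + x₂ - x₁ with hβdef
  have horb : ∀ n : ℕ, (Mmap α x₁ x₂)^[n] t = Int.fract (t + n * β) := by
    intro n
    induction n with
    | zero =>
      simp only [Function.iterate_zero, id_eq, Nat.cast_zero, zero_mul, add_zero]
      exact (Int.fract_eq_self.2 ⟨ht.1.1, ht.1.2⟩).symm
    | succ n ih =>
      have hu : (Mmap α x₁ x₂)^[n] t ∈ Sset α x₁ x₂ := Sset_iterate ht n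
      have hU := hsub hu
      rw [Function.iterate_succ_apply', Mmap_U hU.2, ih,
        show Int.fract (t + n*β) + α + x₂ - x₁ = Int.fract (t + n*β) + β by rw [hβdef]; ring,
        fract_fract_add]
      congr 1
      push_cast
      ring
  have hUn : ∀ n : ℕ, Int.fract (t + n * β) < x₁ := by
    intro n
    have := (hsub (Sset_iterate ht n)).2
    rwa [horb n] at this
  by_cases hirr : Irrational β
  · obtain ⟨n, hn⟩ := exists_fract_orbit_ge hirr t (by linarith : (0:ℝ) < 1 - x₁)
      (by linarith)
    have := hUn n
    rw [show (1:ℝ) - (1 - x₁) = x₁ by ring] at hn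
    linarith
  · have hmem : β ∈ Set.range ((↑) : ℚ → ℝ) := not_not.mp hirr
    obtain ⟨r, hr⟩ := hmem
    set s : ℚ := r - ⌊r⌋ with hsdef
    have hfrac : Int.fract β = (s:ℝ) := by
      rw [← hr, Int.fract, Rat.floor_cast, hsdef]
      push_cast
      ring
    have hs0 : (0:ℚ) ≤ s := by
      rw [hsdef]
      have := Int.floor_le r
      linarith
    have hs1 : s < 1 := by
      rw [hsdef]
      have := Int.lt_floor_add_one r
      linarith
    have hnum0 : 0 ≤ s.num := Rat.num_nonneg.2 hs0
    set q : ℕ := s.den with hqdef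
    set p : ℕ := s.num.toNat with hpdef
    have hq : 0 < q := s.pos
    have hq' : (0:ℝ) < q := by exact_mod_cast hq
    have hpnum : (p:ℤ) = s.num := Int.toNat_of_nonneg hnum0
    have hcop : Nat.Coprime p q := by
      have h := s.reduced
      have : p = s.num.natAbs := by omega
      rwa [← this] at h
    have hβpq : Int.fract β = (p:ℝ)/q := by
      rw [hfrac, Rat.cast_def]
      congr 1
      exact_mod_cast hpnum.symm
    have hpq : p < q := by
      have hden : (0:ℚ) < (s.den:ℚ) := by exact_mod_cast hq
      have h2 : (s.num:ℚ)/(s.den:ℚ) < 1 := by rw [Rat.num_div_den s]; exact hs1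
      have : (s.num:ℚ) < (s.den:ℚ) := (div_lt_one hden).1 h2
      have : s.num < (s.den:ℤ) := by exact_mod_cast this
      omega
    refine ⟨p, q, hpq, hcop, hβpq, ?_⟩
    -- rewrite orbit in terms of p/q
    have hβsplit : β = (p:ℝ)/q + ((⌊β⌋ : ℤ):ℝ) := by
      rw [← hβpq, Int.fract]
      ring
    have horb2 : ∀ n : ℕ, Int.fract (t + n * ((p:ℝ)/q)) < x₁ := by
      intro n
      have h := hUn n
      have : t + (n:ℝ) * β = (t + n * ((p:ℝ)/q)) + ((n * ⌊β⌋ : ℤ):ℝ) := by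
        nth_rewrite 1 [hβsplit]
        push_cast
        ring
      rwa [this, Int.fract_add_intCast] at h
    have h0 : 0 ≤ t := ht.1.1
    have h1 : t < 1 := ht.1.2
    obtain ⟨k, hkdef⟩ : ∃ k : ℕ, ⌊(q:ℝ)*t⌋.toNat = k := ⟨_, rfl⟩
    have hkq : k < q := by
      have := floor_q_lt q hq h0 h1
      omega
    have hq1R : (1:ℝ) ≤ q := by exact_mod_cast hq
    have hψ0 : 0 ≤ Int.fract ((q:ℝ)*t) := Int.fract_nonneg _
    have hψ1 : Int.fract ((q:ℝ)*t) < 1 := Int.fract_lt_one _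
    have hd := cell_decomp q hq h0 h1
    rw [hkdef] at hd
    obtain ⟨n, hn⟩ := orbit_attains p q hq hcop t h0 h1 (q - 1 - k) (by omega)
    have hqk : ((q - 1 - k : ℕ):ℝ) = (q:ℝ) - 1 - k := by
      have hcs : (q - 1 - k : ℕ) + (1 + k) = q := by omega
      have : ((q - 1 - k : ℕ):ℝ) + (1 + (k:ℝ)) = q := by exact_mod_cast hcs
      linarith
    have harg : t + ((q - 1 - k : ℕ):ℝ)/q = ((q:ℝ) - 1 + Int.fract ((q:ℝ)*t))/q := by
      rw [hqk]
      nth_rewrite 1 [hd]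
      field_simp
      ring
    have hval : Int.fract (t + n * ((p:ℝ)/q)) = ((q:ℝ) - 1 + Int.fract ((q:ℝ)*t))/q := by
      rw [hn, harg, Int.fract_eq_self.2 ⟨div_nonneg (by linarith) hq'.le, by
        rw [div_lt_one hq']; linarith⟩]
    have hlt := horb2 n
    rw [hval] at hlt
    calc ((q:ℝ)-1)/q ≤ ((q:ℝ) - 1 + Int.fract ((q:ℝ)*t))/q := by gcongr <;> linarith
    _ < x₁ := hlt

lemma Sset_eq_biUnion_ii (α x₁ x₂ : ℝ) (p q : ℕ) (hx0 : 0 ≤ x₁) (hx : x₁ < x₂)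
    (hpq : p < q) (hcop : Nat.Coprime p q) (hαeq : α = (p:ℝ)/q) (hx2q : x₂ < 1/(q:ℝ)) :
    Sset α x₁ x₂ = ⋃ k ∈ Finset.range q, Ico (x₂ + (k:ℝ)/q) (((k:ℝ)+1)/q) := by
  rw [Sset_char_ii α x₁ x₂ p q hx0 hx hpq hcop hαeq hx2q]
  ext t
  rw [mem_biUnion_ii q (Nat.zero_lt_of_lt hpq) x₂ (le_trans hx0 hx.le) t]
  simp only [Set.mem_setOf_eq]

lemma Sset_eq_biUnion_i (α x₁ x₂ : ℝ) (p q : ℕ) (hx0 : 0 ≤ x₁) (hx : x₁ < x₂) (hx2 : x₂ ≤ 1)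
    (hpq : p < q) (hcop : Nat.Coprime p q) (hβeq : Int.fract (α + x₂ - x₁) = (p:ℝ)/q)
    (hx1q : ((q:ℝ)-1)/q < x₁) :
    Sset α x₁ x₂ = ⋃ k ∈ Finset.range q, Ico ((k:ℝ)/q) (((k:ℝ)-q+1)/q + x₁) := by
  rw [Sset_char_i α x₁ x₂ p q hx0 hx hx2 hpq hcop hβeq hx1q]
  ext t
  rw [mem_biUnion_i q (Nat.zero_lt_of_lt hpq) x₁ (le_trans hx.le hx2) t]
  simp only [Set.mem_setOf_eq]

/-- Characterization of the cases `∅ ≠ 𝓢 ⊆ U` and `∅ ≠ 𝓢 ⊆ V`, with the structure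
of `𝓢` and the value of `Y(α)` in each case. -/
theorem maximalInvariantSet_in_U_or_V (α x₁ x₂ : ℝ) (hα0 : 0 ≤ α) (hα1 : α < 1)
    (hx0 : 0 ≤ x₁) (hx : x₁ < x₂) (hx2 : x₂ ≤ 1) :
    (((Sset α x₁ x₂).Nonempty ∧ Sset α x₁ x₂ ⊆ Set.Ico 0 x₁) ↔
      ∃ p q : ℕ, p < q ∧ Nat.Coprime p q ∧
        Int.fract (α + x₂ - x₁) = (p : ℝ) / q ∧ ((q : ℝ) - 1) / q < x₁) ∧
    (∀ p q : ℕ, p < q → Nat.Coprime p q →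
      Int.fract (α + x₂ - x₁) = (p : ℝ) / q → ((q : ℝ) - 1) / q < x₁ →
      Ymap α x₁ x₂ α = (p : ℝ) / q ∧
      Sset α x₁ x₂ = ⋃ k ∈ Finset.range q,
        Set.Ico ((k : ℝ) / q) (((k : ℝ) - q + 1) / q + x₁)) ∧
    (((Sset α x₁ x₂).Nonempty ∧ Sset α x₁ x₂ ⊆ Set.Ico x₂ 1) ↔
      ∃ p q : ℕ, p < q ∧ Nat.Coprime p q ∧ α = (p : ℝ) / q ∧ x₂ < 1 / q) ∧
    (∀ p q : ℕ, p < q → Nat.Coprime p q → α = (p : ℝ) / q → x₂ < 1 / q →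
      Ymap α x₁ x₂ α = (p : ℝ) / q ∧
      Sset α x₁ x₂ = ⋃ k ∈ Finset.range q,
        Set.Ico (x₂ + (k : ℝ) / q) (((k : ℝ) + 1) / q)) := by
  refine ⟨?_, ?_, ?_, ?_⟩
  · constructor
    · rintro ⟨hne, hsub⟩
      exact onlyif_i α x₁ x₂ hα0 hα1 hx0 hx hx2 hne hsub
    · rintro ⟨p, q, hpq, hcop, hβeq, hx1q⟩
      have hq : 0 < q := Nat.zero_lt_of_lt hpq
      have hq' : (0:ℝ) < q := by exact_mod_cast hq
      have hSeq := Sset_eq_biUnion_i α x₁ x₂ p q hx0 hx hx2 hpq hcop hβeq hx1q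
      constructor
      · refine ⟨0, ?_⟩
        rw [hSeq]
        simp only [Set.mem_iUnion, Finset.mem_range, Set.mem_Ico, exists_prop]
        refine ⟨0, hq, by norm_num, ?_⟩
        push_cast
        have e : ((0:ℝ) - (q:ℝ) + 1)/q + x₁ = x₁ - ((q:ℝ)-1)/q := by ring
        rw [e]
        linarith
      · rw [hSeq]
        intro t ht
        simp only [Set.mem_iUnion, Finset.mem_range, Set.mem_Ico, exists_prop] at ht
        obtain ⟨k, hk, hl, hu⟩ := ht
        have hkq : (k:ℝ) + 1 ≤ q := by exact_mod_cast hk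
        refine ⟨le_trans (by positivity) hl, ?_⟩
        have : ((k:ℝ)-q+1)/q ≤ 0 := div_nonpos_of_nonpos_of_nonneg (by linarith) hq'.le
        linarith
  · intro p q hpq hcop hβeq hx1q
    have hSeq := Sset_eq_biUnion_i α x₁ x₂ p q hx0 hx hx2 hpq hcop hβeq hx1q
    exact ⟨Ymap_val_i α x₁ x₂ p q hα0 hα1 hx0 hx hx2 hpq hcop hβeq hx1q hSeq, hSeq⟩
  · constructor
    · rintro ⟨hne, hsub⟩
      exact onlyif_ii α x₁ x₂ hα0 hα1 hx0 hx hne hsub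
    · rintro ⟨p, q, hpq, hcop, hαeq, hx2q⟩
      have hq : 0 < q := Nat.zero_lt_of_lt hpq
      have hq' : (0:ℝ) < q := by exact_mod_cast hq
      have hSeq := Sset_eq_biUnion_ii α x₁ x₂ p q hx0 hx hpq hcop hαeq hx2q
      constructor
      · refine ⟨x₂, ?_⟩
        rw [hSeq]
        simp only [Set.mem_iUnion, Finset.mem_range, Set.mem_Ico, exists_prop]
        exact ⟨0, hq, by norm_num, by push_cast; simpa using hx2q⟩
      · rw [hSeq]
        intro t ht
        simp only [Set.mem_iUnion, Finset.mem_range, Set.mem_Ico, exists_prop] at ht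
        obtain ⟨k, hk, hl, hu⟩ := ht
        have hkq : (k:ℝ) + 1 ≤ q := by exact_mod_cast hk
        refine ⟨le_trans (le_add_of_nonneg_right (by positivity)) hl, ?_⟩
        have : ((k:ℝ)+1)/q ≤ 1 := by rw [div_le_one hq']; linarith
        linarith
  · intro p q hpq hcop hαeq hx2q
    have hSeq := Sset_eq_biUnion_ii α x₁ x₂ p q hx0 hx hpq hcop hαeq hx2q
    exact ⟨Ymap_val_ii α x₁ x₂ p q hx0 hx hpq hαeq hx2q hSeq, hSeq⟩
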